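/- For n ≥ 3, if λₙ > 1 is the real root of Xⁿ − X^{n−1} − ⋯ − X − 1 = 0, then the field ℚ(λₙ + λₙ⁻¹) is not totally real. -/

import Mathlib

open Polynomial Finset

lemma AY_aeval_comb {K : Type*} [Field K] [Algebra ℚ K] (x : K) (hx : x ≠ 0) (q : ℚ[X]) :
    aeval x (∑ i ∈ range (q.natDegree + 1),
        C (q.coeff i) * ((X : ℚ[X]) ^ 2 + 1) ^ i * X ^ (q.natDegree - i))
      = x ^ q.natDegree * aeval (x + x⁻¹) q := by
  rw [Polynomial.aeval_eq_sum_range (p := q) (x + x⁻¹), map_sum, Finset.mul_sum]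
  refine Finset.sum_congr rfl fun i hi => ?_
  have hid : i ≤ q.natDegree := Nat.lt_succ_iff.mp (Finset.mem_range.mp hi)
  have hx2 : x ^ 2 + 1 = (x + x⁻¹) * x := by field_simp
  have hpow : x ^ i * x ^ (q.natDegree - i) = x ^ q.natDegree := by
    rw [← pow_add]; congr 1; omega
  simp only [map_mul, map_pow, map_add, map_one, aeval_X, aeval_C, Algebra.smul_def]
  rw [hx2, mul_pow]
  calc algebraMap ℚ K (q.coeff i) * ((x + x⁻¹) ^ i * x ^ i) * x ^ (q.natDegree - i)
      = algebraMap ℚ K (q.coeff i) * (x + x⁻¹) ^ i * (x ^ i * x ^ (q.natDegree - i)) := by ring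
    _ = x ^ q.natDegree * (algebraMap ℚ K (q.coeff i) * (x + x⁻¹) ^ i) := by rw [hpow]; ring


open Polynomial Finset

-- uniqueness of roots > 1 of x^(n+1) - 2x^n + 1
lemma AY_gt_one_unique (n : ℕ) (hn : 3 ≤ n) (r s : ℝ) (hr : 1 < r) (hs : 1 < s)
    (hQr : r ^ (n + 1) - 2 * r ^ n + 1 = 0) (hQs : s ^ (n + 1) - 2 * s ^ n + 1 = 0) :
    r = s := by
  set f : ℝ → ℝ := fun x => x ^ (n + 1) - 2 * x ^ n + 1 with hf
  set c : ℝ := 2 * n / (n + 1) with hc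
  have hn0 : (0:ℝ) < n + 1 := by positivity
  have hc1 : (1:ℝ) < c := by
    rw [hc, lt_div_iff₀ hn0]
    have : (3:ℝ) ≤ n := by exact_mod_cast hn
    linarith
  have hderiv : ∀ x : ℝ, HasDerivAt f ((n + 1) * x ^ n - 2 * (n * x ^ (n - 1))) x := by
    intro x
    have h1 := hasDerivAt_pow (n + 1) x
    have h2 := (hasDerivAt_pow n x).const_mul (2:ℝ)
    simpa [hf] using (h1.sub h2).add_const 1
  have hderiv' : ∀ x : ℝ, deriv f x = (n + 1) * x ^ n - 2 * (n * x ^ (n - 1)) :=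
    fun x => (hderiv x).deriv
  have hsign : ∀ x : ℝ, 0 < x → deriv f x = x ^ (n - 1) * ((n + 1) * x - 2 * n) := by
    intro x hx
    rw [hderiv']
    have : x ^ n = x ^ (n - 1) * x := by
      rw [← pow_succ]; congr 1; omega
    rw [this]; ring
  have hcont : Continuous f := by continuity
  -- any root > 1 is > c
  have hgtc : ∀ t : ℝ, 1 < t → f t = 0 → c < t := by
    intro t ht hft
    by_contra hle
    push_neg at hle
    have hanti : StrictAntiOn f (Set.Icc 1 c) := by
      apply strictAntiOn_of_deriv_neg (convex_Icc 1 c) hcont.continuousOn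
      intro x hx
      rw [interior_Icc] at hx
      have hx0 : (0:ℝ) < x := by linarith [hx.1]
      rw [hsign x hx0]
      have h1 : (0:ℝ) < x ^ (n - 1) := pow_pos hx0 _
      have h2 : (n + 1 : ℝ) * x - 2 * n < 0 := by
        have : x < c := hx.2
        rw [hc, lt_div_iff₀ hn0] at this
        linarith
      exact mul_neg_of_pos_of_neg h1 h2
    have hf1 : f 1 = 0 := by simp [hf]; norm_num
    have := hanti (Set.mem_Icc.mpr ⟨le_refl 1, by linarith⟩)
      (Set.mem_Icc.mpr ⟨le_of_lt ht, hle⟩) ht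
    rw [hf1, hft] at this
    exact lt_irrefl 0 this
  have hmono : StrictMonoOn f (Set.Ici c) := by
    apply strictMonoOn_of_deriv_pos (convex_Ici c) hcont.continuousOn
    intro x hx
    rw [interior_Ici] at hx
    have hxc : c < x := hx
    have hx0 : (0:ℝ) < x := by linarith
    rw [hsign x hx0]
    have h1 : (0:ℝ) < x ^ (n - 1) := pow_pos hx0 _
    have h2 : (0:ℝ) < (n + 1) * x - 2 * n := by
      rw [hc, div_lt_iff₀ hn0] at hxc
      linarith
    exact mul_pos h1 h2
  have hfeq : f r = f s := by simp only [hf]; linarith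
  exact hmono.injOn (Set.mem_Ici.mpr (le_of_lt (hgtc r hr hQr)))
    (Set.mem_Ici.mpr (le_of_lt (hgtc s hs hQs))) hfeq


open Polynomial Finset

-- classification of real roots
lemma AY_root_cases (n : ℕ) (hn : 3 ≤ n) (r : ℝ)
    (hQr : r ^ (n + 1) - 2 * r ^ n + 1 = 0) :
    r = 1 ∨ 1 < r ∨ (-1 < r ∧ r < 0) := by
  have hfac : r ^ n * (r - 2) = -1 := by
    have : r ^ (n + 1) = r ^ n * r := by rw [pow_succ]
    nlinarith [this]
  rcases le_or_gt r (-1) with h1 | h1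
  · exfalso
    have habs : |r ^ n| * |r - 2| = 1 := by
      rw [← abs_mul, hfac]; norm_num
    have h2 : (1:ℝ) ≤ |r ^ n| := by
      rw [abs_pow]
      have : (1:ℝ) ≤ |r| := by rw [abs_of_nonpos (by linarith)]; linarith
      exact one_le_pow₀ this
    have h3 : (3:ℝ) ≤ |r - 2| := by rw [abs_of_nonpos (by linarith)]; linarith
    nlinarith
  rcases lt_trichotomy r 0 with h2 | h2 | h2
  · right; right; exact ⟨h1, h2⟩
  · exfalso; rw [h2] at hfac; rw [zero_pow (by omega : n ≠ 0)] at hfac; norm_num at hfac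
  rcases lt_trichotomy r 1 with h3 | h3 | h3
  · exfalso
    have hrn : r ^ n ≤ r := by
      calc r ^ n ≤ r ^ 1 := pow_le_pow_of_le_one (le_of_lt h2) (le_of_lt h3) (by omega)
        _ = r := pow_one r
    have hpos : 0 < r ^ n := pow_pos h2 n
    nlinarith
  · left; exact h3
  · right; left; exact h3

-- uniqueness of roots in (-1, 0)
lemma AY_neg_unique (n : ℕ) (hn : 3 ≤ n) (r s : ℝ) (hr : -1 < r ∧ r < 0) (hs : -1 < s ∧ s < 0)
    (hQr : r ^ (n + 1) - 2 * r ^ n + 1 = 0) (hQs : s ^ (n + 1) - 2 * s ^ n + 1 = 0) :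
    r = s := by
  have hfacr : r ^ n * (2 - r) = 1 := by
    have : r ^ (n + 1) = r ^ n * r := by rw [pow_succ]
    nlinarith [this]
  have hfacs : s ^ n * (2 - s) = 1 := by
    have : s ^ (n + 1) = s ^ n * s := by rw [pow_succ]
    nlinarith [this]
  have hrn_pos : 0 < r ^ n := by nlinarith [hfacr]
  have heven : Even n := by
    by_contra hodd
    have : Odd n := Nat.not_even_iff_odd.mp hodd
    have : r ^ n < 0 := Odd.pow_neg this hr.2
    linarith
  -- substitute u = -r, v = -s
  set u := -r with hu
  set v := -s with hv
  have hru : r ^ n = u ^ n := by rw [hu, Even.neg_pow heven]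
  have hsv : s ^ n = v ^ n := by rw [hv, Even.neg_pow heven]
  have hu01 : 0 < u ∧ u < 1 := ⟨by linarith [hr.2], by linarith [hr.1]⟩
  have hv01 : 0 < v ∧ v < 1 := ⟨by linarith [hs.2], by linarith [hs.1]⟩
  have hfu : u ^ n * (2 + u) = 1 := by rw [← hru]; rw [hu] at *; nlinarith [hfacr]
  have hfv : v ^ n * (2 + v) = 1 := by rw [← hsv]; rw [hv] at *; nlinarith [hfacs]
  have key : ∀ a b : ℝ, 0 < a → a < b → a ^ n * (2 + a) < b ^ n * (2 + b) := by
    intro a b ha hab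
    have h1 : a ^ n < b ^ n := pow_lt_pow_left₀ hab (le_of_lt ha) (by omega)
    have h2 : (0:ℝ) < a ^ n := pow_pos ha n
    nlinarith
  rcases lt_trichotomy u v with h | h | h
  · exfalso; have := key u v hu01.1 h; rw [hfu, hfv] at this; exact lt_irrefl 1 this
  · rw [hu, hv] at h; linarith
  · exfalso; have := key v u hv01.1 h; rw [hfu, hfv] at this; exact lt_irrefl 1 this

/-- For a real algebraic number `x`, `ℚ(x)` is totally real iff every complex root of the
minimal polynomial of `x` over `ℚ` is real. -/
def AdjoinIsTotallyReal (x : ℝ) : Prop :=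
  ∀ z : ℂ, Polynomial.aeval z (minpoly ℚ x) = 0 → z.im = 0

theorem arnoux_yoccoz_trace_field_not_totally_real (n : ℕ) (hn : 3 ≤ n)
    (lam : ℝ) (hlam : 1 < lam)
    (hroot : ((X : ℝ[X]) ^ n - ∑ i ∈ Finset.range n, (X : ℝ[X]) ^ i).eval lam = 0) :
    ¬ AdjoinIsTotallyReal (lam + lam⁻¹) := by
  intro hTR
  have hlam0 : lam ≠ 0 := by linarith
  have hQ : lam ^ (n + 1) - 2 * lam ^ n + 1 = 0 := by
    have h1 : lam ^ n - ∑ i ∈ range n, lam ^ i = 0 := by simpa using hroot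
    have h2 := geom_sum_mul lam n
    linear_combination (lam - 1) * h1 + h2
  have hlampow : (0:ℝ) < lam ^ n := pow_pos (by linarith) n
  have hlam2 : lam < 2 := by nlinarith [hQ, hlampow, pow_succ lam n]
  -- rational polynomial
  set P : ℚ[X] := X ^ n - ∑ i ∈ range n, X ^ i with hP
  have hPmonic : P.Monic := by
    apply monic_X_pow_sub
    refine lt_of_le_of_lt (degree_sum_le _ _) ?_
    rw [Finset.sup_lt_iff (by exact_mod_cast WithBot.bot_lt_coe n : (⊥ : WithBot ℕ) < (n : WithBot ℕ))]
    intro i hi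
    rw [degree_X_pow]
    exact_mod_cast Finset.mem_range.mp hi
  have hPlam : aeval lam P = 0 := by
    rw [hP]
    simp only [map_sub, map_pow, map_sum, aeval_X]
    simpa using hroot
  have hint : IsIntegral ℚ lam := ⟨P, hPmonic, hPlam⟩
  set p := minpoly ℚ lam with hp
  have hpdvd : p ∣ P := minpoly.dvd ℚ lam hPlam
  have hpne : p ≠ 0 := minpoly.ne_zero hint
  have hdegpos : 0 < p.natDegree := minpoly.natDegree_pos hint
  have hrootQ : ∀ z : ℂ, aeval z p = 0 → z ^ (n+1) - 2 * z ^ n + 1 = 0 := by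
    intro z hz
    obtain ⟨g, hg⟩ := hpdvd
    have hzP : aeval z P = 0 := by rw [hg, map_mul, hz, zero_mul]
    have h1 : z ^ n - ∑ i ∈ range n, z ^ i = 0 := by
      rw [hP] at hzP
      simpa using hzP
    have h2 := geom_sum_mul z n
    linear_combination (z - 1) * h1 + h2
  have hδne0 : ∀ z : ℂ, aeval z p = 0 → z ≠ 0 := by
    intro z hz h0
    have := hrootQ z hz
    rw [h0] at this
    simp [zero_pow (by omega : n ≠ 0)] at this
  have h1notroot : ∀ z : ℂ, aeval z p = 0 → z ≠ 1 := by
    intro z hz h1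
    obtain ⟨g, hg⟩ := hpdvd
    have hzP : aeval z P = 0 := by rw [hg, map_mul, hz, zero_mul]
    rw [hP, h1] at hzP
    simp only [map_sub, map_pow, map_sum, aeval_X, one_pow] at hzP
    simp at hzP
    have : (n:ℂ) = 1 := by linear_combination -hzP
    have : n = 1 := by exact_mod_cast this
    omega
  set pC := p.map (algebraMap ℚ ℂ) with hpC
  have hmem : ∀ z : ℂ, z ∈ pC.roots ↔ aeval z p = 0 := by
    intro z
    rw [hpC, mem_roots (Polynomial.map_ne_zero hpne), IsRoot, eval_map, ← aeval_def]
  have hcard : pC.roots.card = p.natDegree :=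
    by rw [← Splits.natDegree_eq_card_roots (IsAlgClosed.splits _), hpC, natDegree_map]
  have hnodup : pC.roots.Nodup :=
    nodup_roots ((separable_map _).mpr (minpoly.irreducible hint).separable)
  by_cases hex : ∃ z ∈ pC.roots, z.im ≠ 0
  · -- genuine case : a nonreal conjugate δ
    obtain ⟨δ, hδmem, hδim⟩ := hex
    have hδp : aeval δ p = 0 := (hmem δ).mp hδmem
    have hδQ := hrootQ δ hδp
    have hδ0 : δ ≠ 0 := hδne0 δ hδp
    have hns : Complex.normSq δ ≠ 1 := by
      intro hns
      have habs1 : ‖δ‖ = 1 := by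
        rw [Complex.norm_def, hns, Real.sqrt_one]
      have hfac : δ ^ n * (δ - 2) = -1 := by linear_combination hδQ
      have habs2 : ‖δ - 2‖ = 1 := by
        have h := congrArg norm hfac
        rw [norm_mul, norm_pow, habs1, one_pow, one_mul] at h
        simpa using h
      have h2 : Complex.normSq (δ - 2) = 1 := by
        rw [← Complex.sq_norm, habs2]; norm_num
      rw [Complex.normSq_apply] at hns
      rw [Complex.normSq_apply] at h2
      simp only [Complex.sub_re, Complex.sub_im, Complex.re_ofNat, Complex.im_ofNat] at h2
      have him2 : 0 < δ.im * δ.im := mul_self_pos.mpr hδim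
      nlinarith [hns, h2, him2]
    set q := minpoly ℚ (lam + lam⁻¹) with hq
    set d := q.natDegree with hd
    set h : ℚ[X] := ∑ i ∈ range (d+1), C (q.coeff i) * ((X:ℚ[X])^2+1)^i * X^(d-i) with hh
    have hlamh : aeval lam h = 0 := by
      rw [hh, AY_aeval_comb lam hlam0 q, hq, minpoly.aeval, mul_zero]
    obtain ⟨g, hg⟩ := minpoly.dvd ℚ lam hlamh
    have hδh : aeval δ h = 0 := by rw [hg, map_mul, hδp, zero_mul]
    rw [hh, AY_aeval_comb δ hδ0 q] at hδh
    have hwq : aeval (δ + δ⁻¹) q = 0 := by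
      rcases mul_eq_zero.mp hδh with h' | h'
      · exact absurd h' (pow_ne_zero _ hδ0)
      · exact h'
    have hwim := hTR (δ + δ⁻¹) hwq
    rw [Complex.add_im, Complex.inv_im] at hwim
    have hns0 : Complex.normSq δ ≠ 0 := (Complex.normSq_pos.mpr hδ0).ne'
    have hkey : δ.im * (Complex.normSq δ - 1) = 0 := by
      field_simp at hwim
      linear_combination hwim
    rcases mul_eq_zero.mp hkey with h' | h'
    · exact hδim h'
    · exact hns (by linarith)
  · -- all conjugates real
    push_neg at hex
    have hlamC : aeval (lam:ℂ) p = 0 := by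
      have h0 : aeval lam p = 0 := minpoly.aeval ℚ lam
      have h1 : aeval ((algebraMap ℝ ℂ) lam) p = (algebraMap ℝ ℂ) (aeval lam p) :=
        aeval_algebraMap_apply ℂ lam p
      rw [h0, map_zero] at h1
      simpa using h1
    have hlamroot : (lam:ℂ) ∈ pC.roots := (hmem _).mpr hlamC
    have hclass : ∀ z ∈ pC.roots, z = (lam:ℂ) ∨
        (z = (z.re:ℂ) ∧ -1 < z.re ∧ z.re < 0 ∧ z.re ^ (n+1) - 2 * z.re ^ n + 1 = 0) := by
      intro z hz
      have hzim := hex z hz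
      have hzre : z = (z.re : ℂ) := by
        apply Complex.ext <;> simp [hzim]
      have hzp : aeval z p = 0 := (hmem z).mp hz
      have hQz : (z.re:ℝ) ^ (n+1) - 2 * z.re ^ n + 1 = 0 := by
        have hcq := hrootQ z hzp
        rw [hzre] at hcq
        exact_mod_cast hcq
      rcases AY_root_cases n hn z.re hQz with hcc | hcc | hcc
      · exact absurd (by rw [hzre, hcc]; norm_num : z = 1) (h1notroot z hzp)
      · left
        rw [hzre]
        norm_cast
        exact AY_gt_one_unique n hn z.re lam hcc hlam hQz hQ
      · right; exact ⟨hzre, hcc.1, hcc.2, hQz⟩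
    have hdeg2 : p.natDegree ≤ 2 := by
      rw [← hcard, ← Multiset.toFinset_card_of_nodup hnodup]
      by_cases hb : ∃ z ∈ pC.roots, z ≠ (lam:ℂ)
      · obtain ⟨z₀, hz₀mem, hz₀ne⟩ := hb
        have hsub : pC.roots.toFinset ⊆ {(lam:ℂ), z₀} := by
          intro z hz
          rw [Multiset.mem_toFinset] at hz
          rcases hclass z hz with hcase | hcase
          · simp [hcase]
          rcases hclass z₀ hz₀mem with hcase0 | hcase0
          · exact absurd hcase0 hz₀ne
          have hre : z.re = z₀.re := AY_neg_unique n hn z.re z₀.re ⟨hcase.2.1, hcase.2.2.1⟩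
            ⟨hcase0.2.1, hcase0.2.2.1⟩ hcase.2.2.2 hcase0.2.2.2
          have hzz : z = z₀ := by rw [hcase.1, hcase0.1, hre]
          simp [hzz]
        calc pC.roots.toFinset.card ≤ ({(lam:ℂ), z₀} : Finset ℂ).card := Finset.card_le_card hsub
          _ ≤ 2 := (Finset.card_insert_le _ _).trans (by simp)
      · push_neg at hb
        have hsub : pC.roots.toFinset ⊆ {(lam:ℂ)} := by
          intro z hz
          rw [Multiset.mem_toFinset] at hz
          simp [hb z hz]
        calc pC.roots.toFinset.card ≤ ({(lam:ℂ)} : Finset ℂ).card := Finset.card_le_card hsub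
          _ ≤ 2 := by simp
    -- integer constant coefficient
    set PZ : ℤ[X] := X ^ n - ∑ i ∈ range n, X ^ i with hPZ
    have hPZmonic : PZ.Monic := by
      apply monic_X_pow_sub
      refine lt_of_le_of_lt (degree_sum_le _ _) ?_
      rw [Finset.sup_lt_iff (by exact_mod_cast WithBot.bot_lt_coe n : (⊥ : WithBot ℕ) < (n : WithBot ℕ))]
      intro i hi
      rw [degree_X_pow]
      exact_mod_cast Finset.mem_range.mp hi
    have hPZlam : aeval lam PZ = 0 := by
      rw [hPZ]
      simp only [map_sub, map_pow, map_sum, aeval_X]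
      simpa using hroot
    have hintZ : IsIntegral ℤ lam := ⟨PZ, hPZmonic, hPZlam⟩
    have hpmap : p = (minpoly ℤ lam).map (algebraMap ℤ ℚ) :=
      minpoly.isIntegrallyClosed_eq_field_fractions' ℚ hintZ
    set k : ℤ := (minpoly ℤ lam).coeff 0 with hk
    have hcoeff0 : p.coeff 0 = (k : ℚ) := by rw [hpmap, coeff_map]; simp [hk]
    have hpCmonic : pC.Monic := (minpoly.monic hint).map _
    have heval0 : pC.eval 0 = (pC.roots.map fun a => -a).prod := by
      conv_lhs => rw [(IsAlgClosed.splits pC).eq_prod_roots_of_monic hpCmonic]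
      rw [eval_multiset_prod, Multiset.map_map]
      congr 1
      apply Multiset.map_congr rfl
      intro a _
      simp
    have hevalk : pC.eval 0 = (k:ℂ) := by
      rw [← coeff_zero_eq_eval_zero, hpC, coeff_map, hcoeff0]
      simp
    rcases (by omega : p.natDegree = 1 ∨ p.natDegree = 2) with hdeg | hdeg
    · -- degree 1 : lam would be an integer
      rw [hdeg] at hcard
      obtain ⟨a, ha⟩ := Multiset.card_eq_one.mp hcard
      rw [ha] at hlamroot heval0
      have haval : a = (lam:ℂ) := (Multiset.mem_singleton.mp hlamroot).symm
      rw [haval] at heval0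
      simp only [Multiset.map_singleton, Multiset.prod_singleton] at heval0
      rw [hevalk] at heval0
      have hklam : (k:ℝ) = -lam := by exact_mod_cast heval0
      have h1 : (1:ℤ) < -k := by
        have : (1:ℝ) < -(k:ℝ) := by linarith
        exact_mod_cast this
      have h2 : (-k) < (2:ℤ) := by
        have : -(k:ℝ) < 2 := by linarith
        exact_mod_cast this
      omega
    · -- degree 2
      rw [hdeg] at hcard
      obtain ⟨a, b, hab⟩ := Multiset.card_eq_two.mp hcard
      have hne : a ≠ b := by
        rw [hab] at hnodup
        simp [Multiset.nodup_cons] at hnodup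
        exact hnodup
      have hlam_ab : (lam:ℂ) = a ∨ (lam:ℂ) = b := by
        have := hlamroot
        rw [hab] at this
        simpa using this
      obtain ⟨z₀, hz₀mem, hz₀ne, hprod2⟩ :
          ∃ z₀, z₀ ∈ pC.roots ∧ z₀ ≠ (lam:ℂ) ∧ (pC.roots.map fun a => -a).prod = (lam:ℂ) * z₀ := by
        rcases hlam_ab with hcl | hcl
        · refine ⟨b, by rw [hab]; simp, ?_, ?_⟩
          · intro hbl
            exact hne (by rw [← hcl, hbl])
          · rw [hab, ← hcl]
            simp only [Multiset.insert_eq_cons, Multiset.map_cons, Multiset.map_singleton,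
              Multiset.prod_cons, Multiset.prod_singleton]
            ring
        · refine ⟨a, by rw [hab]; simp, ?_, ?_⟩
          · intro hal
            exact hne (by rw [← hcl, hal])
          · rw [hab, ← hcl]
            simp only [Multiset.insert_eq_cons, Multiset.map_cons, Multiset.map_singleton,
              Multiset.prod_cons, Multiset.prod_singleton]
            ring
      rcases hclass z₀ hz₀mem with hcase0 | hcase0
      · exact hz₀ne hcase0
      obtain ⟨hz₀re, hβ1, hβ2, hβQ⟩ := hcase0
      set β := z₀.re with hβ
      have hkR : (k:ℝ) = lam * β := by
        have hc : (k:ℂ) = ((lam * β : ℝ) : ℂ) := by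
          rw [← hevalk, heval0, hprod2, hz₀re]
          push_cast
          ring
        exact_mod_cast hc
      have hkneg : (k:ℝ) < 0 := by
        rw [hkR]
        exact mul_neg_of_pos_of_neg (by linarith) hβ2
      have hkgt : (-2:ℝ) < (k:ℝ) := by
        rw [hkR]
        nlinarith [mul_pos (show (0:ℝ) < lam by linarith) (show (0:ℝ) < β + 1 by linarith)]
      have hkm1 : k = -1 := by
        have a1 : (-2:ℤ) < k := by exact_mod_cast hkgt
        have a2 : k < 0 := by exact_mod_cast hkneg
        omega
      have hlb : lam * β = -1 := by
        rw [← hkR, hkm1]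
        norm_num
      have hβval : β = -lam⁻¹ := by
        field_simp
        linarith [hlb]
      rcases Nat.even_or_odd n with hpar | hpar
      · -- n even
        have h1 : β ^ n = (lam ^ n)⁻¹ := by rw [hβval, Even.neg_pow hpar, inv_pow]
        have h2 : β ^ (n+1) = -((lam ^ n)⁻¹ * lam⁻¹) := by
          rw [pow_succ, h1, hβval]
          ring
        rw [h1, h2] at hβQ
        have hAne : lam ^ n ≠ 0 := ne_of_gt hlampow
        have e1 : -1 - 2*lam + lam ^ n * lam = 0 := by
          field_simp at hβQ
          have hfactor : lam ^ n * (-1 - 2*lam + lam ^ n * lam) = 0 := by linear_combination lam ^ n * hβQ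
          rcases mul_eq_zero.mp hfactor with h' | h'
          · exact absurd h' (ne_of_gt hlampow)
          · exact h'
        have e2 : lam ^ n * lam - 2 * lam ^ n + 1 = 0 := by
          have hq2 := hQ
          rw [pow_succ] at hq2
          linarith
        have hA : lam ^ n = lam + 1 := by linarith
        have hAl : lam ^ n * lam = (lam + 1) * lam := by rw [hA]
        have hsq : lam ^ 2 = lam + 1 := by linear_combination e1 - hAl
        have hlt : lam ^ 2 < lam ^ n := pow_lt_pow_right₀ hlam (by omega)
        rw [hsq, hA] at hlt
        exact lt_irrefl _ hlt
      · -- n odd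
        have h1 : β ^ n = -((lam ^ n)⁻¹) := by rw [hβval, Odd.neg_pow hpar, inv_pow]
        have h2 : β ^ (n+1) = (lam ^ n)⁻¹ * lam⁻¹ := by
          rw [pow_succ, h1, hβval]
          ring
        rw [h1, h2] at hβQ
        have c1 : 0 < (lam ^ n)⁻¹ * lam⁻¹ := by positivity
        have c2 : 0 < (lam ^ n)⁻¹ := by positivity
        linarith [hβQ, c1, c2]
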